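/- Derivatives of the tilted log-density are cumulants: fix y₀ ∈ ℝ and let G̃_{y₀} be the probability measure on [-c, c] defined by dG̃_{y₀}(θ) = A · exp(y₀θ/σ² − θ²/(2σ²)) dG(θ), where A = A(G, y₀) is the normalizing constant, and let K(t) = log ∫ e^{tθ} dG̃_{y₀}(θ) be its cumulant generating function. Then for every integer k ≥ 1, the k-th derivative of y ↦ ℓ(G; y) = log f_G(y) + y²/(2σ²) at y₀ equals σ^{−2k} · K^{(k)}(0), the k-th cumulant of G̃_{y₀} divided by σ^{2k}. -/

import Mathlib

open MeasureTheory Set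
open scoped ENNReal NNReal

/-- The standard normal density `φ(z) = (2π)^{-1/2} e^{-z²/2}`. -/
noncomputable def stdNormalPDF (z : ℝ) : ℝ := (Real.sqrt (2 * Real.pi))⁻¹ * Real.exp (-z ^ 2 / 2)

/-- The mixture (marginal) density `f_G(y) = (1/σ) ∫ φ((y−θ)/σ) dG(θ)`. -/
noncomputable def mixDens (σ : ℝ) (G : Measure ℝ) (y : ℝ) : ℝ :=
  (1 / σ) * ∫ θ, stdNormalPDF ((y - θ) / σ) ∂G

section Aux

variable {σ c : ℝ} {G : Measure ℝ}

/-- Integrability of continuous functions against a compactly supported finite measure. -/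
lemma aux_integrable [IsFiniteMeasure G] (hG : ∀ᵐ θ ∂G, θ ∈ Icc (-c) c)
    {h : ℝ → ℝ} (hh : Continuous h) : Integrable h G := by
  obtain ⟨C, hC⟩ := (isCompact_Icc (a := -c) (b := c)).exists_bound_of_continuousOn
    hh.continuousOn
  exact (integrable_const C).mono' hh.aestronglyMeasurable
    (hG.mono fun θ hθ => by simpa using hC θ hθ)

/-- The integrand family: `n`-th moment type integrals. -/
noncomputable def mgfF (σ : ℝ) (G : Measure ℝ) (n : ℕ) (y : ℝ) : ℝ :=
  ∫ θ, (θ / σ ^ 2) ^ n * Real.exp (y * θ / σ ^ 2 - θ ^ 2 / (2 * σ ^ 2)) ∂G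

lemma aux_hasDerivAt (hσ : 0 < σ) [IsProbabilityMeasure G]
    (hG : ∀ᵐ θ ∂G, θ ∈ Icc (-c) c) (n : ℕ) (y : ℝ) :
    HasDerivAt (mgfF σ G n) (mgfF σ G (n + 1) y) y := by
  have hσ2 : (0:ℝ) < σ ^ 2 := by positivity
  set F : ℝ → ℝ → ℝ := fun x θ => (θ / σ ^ 2) ^ n * Real.exp (x * θ / σ ^ 2 - θ ^ 2 / (2 * σ ^ 2))
    with hF
  set F' : ℝ → ℝ → ℝ := fun x θ =>
    (θ / σ ^ 2) ^ (n + 1) * Real.exp (x * θ / σ ^ 2 - θ ^ 2 / (2 * σ ^ 2)) with hF'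
  have hcont : ∀ (m : ℕ) (x : ℝ), Continuous fun θ : ℝ => (θ / σ ^ 2) ^ m *
      Real.exp (x * θ / σ ^ 2 - θ ^ 2 / (2 * σ ^ 2)) := by
    intro m x; fun_prop
  set B : ℝ := (|c| / σ ^ 2 + 1) ^ (n + 1) * Real.exp ((|y| + 1) * (|c| / σ ^ 2 + 1)) with hB
  have key := hasDerivAt_integral_of_dominated_loc_of_deriv_le (μ := G) (x₀ := y)
    (F := F) (F' := F') (bound := fun _ => B) (Metric.ball_mem_nhds y one_pos)
    (Filter.Eventually.of_forall fun x => (hcont n x).aestronglyMeasurable)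
    (aux_integrable hG (hcont n y))
    ((hcont (n + 1) y).aestronglyMeasurable)
    (hG.mono ?_) (integrable_const B) (hG.mono ?_)
  · exact key.2
  · -- bound
    intro θ hθ x hx
    have habs : |θ| ≤ |c| := by
      rw [abs_le]
      exact ⟨by linarith [hθ.1, le_abs_self c], by linarith [hθ.2, le_abs_self c]⟩
    have hθd : |θ / σ ^ 2| ≤ |c| / σ ^ 2 + 1 := by
      rw [abs_div, abs_of_pos hσ2]
      have h1 : |θ| / σ ^ 2 ≤ |c| / σ ^ 2 := by gcongr
      linarith
    have hxle : |x| ≤ |y| + 1 := by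
      have h1 : |x - y| < 1 := mem_ball_iff_norm.mp hx
      calc |x| = |x - y + y| := by ring_nf
        _ ≤ |x - y| + |y| := abs_add_le _ _
        _ ≤ |y| + 1 := by linarith
    have hexp : Real.exp (x * θ / σ ^ 2 - θ ^ 2 / (2 * σ ^ 2)) ≤
        Real.exp ((|y| + 1) * (|c| / σ ^ 2 + 1)) := by
      apply Real.exp_le_exp.mpr
      have h1 : x * θ / σ ^ 2 ≤ |x| * |θ / σ ^ 2| := by
        rw [mul_div_assoc, ← abs_mul]; exact le_abs_self _
      have h3 : |x| * |θ / σ ^ 2| ≤ (|y| + 1) * (|c| / σ ^ 2 + 1) :=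
        mul_le_mul hxle hθd (abs_nonneg _) (by positivity)
      have h4 : 0 ≤ θ ^ 2 / (2 * σ ^ 2) := by positivity
      linarith
    calc ‖F' x θ‖ = |θ / σ ^ 2| ^ (n + 1) * Real.exp (x * θ / σ ^ 2 - θ ^ 2 / (2 * σ ^ 2)) := by
          rw [hF', Real.norm_eq_abs, abs_mul, abs_pow, abs_of_pos (Real.exp_pos _)]
      _ ≤ B := mul_le_mul (pow_le_pow_left₀ (abs_nonneg _) hθd _) hexp
          (le_of_lt (Real.exp_pos _)) (by positivity)
  · -- derivative
    intro θ _ x _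
    have h1 : HasDerivAt (fun x : ℝ => x * θ / σ ^ 2 - θ ^ 2 / (2 * σ ^ 2)) (θ / σ ^ 2) x := by
      simpa using (((hasDerivAt_id x).mul_const θ).div_const (σ ^ 2)).sub_const
        (θ ^ 2 / (2 * σ ^ 2))
    have h2 := (h1.exp).const_mul ((θ / σ ^ 2) ^ n)
    exact h2.congr_deriv (by rw [hF']; simp only [pow_succ]; ring)

lemma aux_contDiff (hσ : 0 < σ) [IsProbabilityMeasure G]
    (hG : ∀ᵐ θ ∂G, θ ∈ Icc (-c) c) (k : ℕ) (n : ℕ) :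
    ContDiff ℝ (k : ℕ) (mgfF σ G n) := by
  induction k generalizing n with
  | zero =>
    rw [Nat.cast_zero, contDiff_zero]
    exact continuous_iff_continuousAt.mpr fun y => (aux_hasDerivAt hσ hG n y).continuousAt
  | succ k ih =>
    have hd : deriv (mgfF σ G n) = mgfF σ G (n + 1) :=
      funext fun y => (aux_hasDerivAt hσ hG n y).deriv
    rw [show ((k + 1 : ℕ) : WithTop ℕ∞) = (k : ℕ) + 1 by push_cast; ring]
    rw [contDiff_succ_iff_deriv]
    refine ⟨fun y => (aux_hasDerivAt hσ hG n y).differentiableAt, ?_, ?_⟩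
    · intro h; exact absurd h (by simp)
    · rw [hd]; exact ih (n + 1)

end Aux

/-- **Derivatives of the tilted log-density are cumulants**: for the tilted measure
`dG̃_{y₀}(θ) = A exp(y₀θ/σ² − θ²/(2σ²)) dG(θ)` with cumulant generating function `K`,
the `k`-th derivative of `y ↦ log f_G(y) + y²/(2σ²)` at `y₀` equals `K^{(k)}(0) / σ^{2k}`. -/
theorem tiltedLogDens_derivs_are_cumulants (σ c : ℝ) (hσ : 0 < σ) (hc : 0 < c)
    (G : Measure ℝ) [IsProbabilityMeasure G] (hG : ∀ᵐ θ ∂G, θ ∈ Icc (-c) c)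
    (y₀ : ℝ) (A : ℝ)
    (hA : A = (∫ θ, Real.exp (y₀ * θ / σ ^ 2 - θ ^ 2 / (2 * σ ^ 2)) ∂G)⁻¹)
    (Gtilt : Measure ℝ)
    (hGtilt : Gtilt = G.withDensity
      (fun θ => ENNReal.ofReal (A * Real.exp (y₀ * θ / σ ^ 2 - θ ^ 2 / (2 * σ ^ 2)))))
    (K : ℝ → ℝ) (hK : K = fun t => Real.log (∫ θ, Real.exp (t * θ) ∂Gtilt)) :
    ∀ k : ℕ, 1 ≤ k →
      iteratedDeriv k (fun y => Real.log (mixDens σ G y) + y ^ 2 / (2 * σ ^ 2)) y₀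
        = iteratedDeriv k K 0 / σ ^ (2 * k) := by
  intro k hk
  have hσ2 : (0:ℝ) < σ ^ 2 := by positivity
  -- M is the zeroth member of the family
  set M : ℝ → ℝ := fun y => ∫ θ, Real.exp (y * θ / σ ^ 2 - θ ^ 2 / (2 * σ ^ 2)) ∂G with hM
  have hM0 : M = mgfF σ G 0 := by
    funext y; simp [hM, mgfF]
  -- positivity of M
  have hMpos : ∀ y, 0 < M y := by
    intro y
    have hint : Integrable (fun θ => Real.exp (y * θ / σ ^ 2 - θ ^ 2 / (2 * σ ^ 2))) G :=
      aux_integrable hG (by fun_prop)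
    have hlb : ∀ᵐ θ ∂G, Real.exp (-(|y| * c / σ ^ 2 + c ^ 2 / (2 * σ ^ 2)))
        ≤ Real.exp (y * θ / σ ^ 2 - θ ^ 2 / (2 * σ ^ 2)) := by
      refine hG.mono fun θ hθ => Real.exp_le_exp.mpr ?_
      have habs : |θ| ≤ c := abs_le.mpr ⟨hθ.1, hθ.2⟩
      have h1 : -(|y| * c) ≤ y * θ := by
        have : |y * θ| ≤ |y| * c := by
          rw [abs_mul]; exact mul_le_mul_of_nonneg_left habs (abs_nonneg y)
        linarith [neg_abs_le (y * θ)]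
      have h2 : θ ^ 2 ≤ c ^ 2 := by nlinarith [abs_nonneg θ, sq_abs θ]
      have h3 : -(|y| * c) / σ ^ 2 ≤ y * θ / σ ^ 2 := by gcongr
      have h4 : θ ^ 2 / (2 * σ ^ 2) ≤ c ^ 2 / (2 * σ ^ 2) := by gcongr
      have h5 : -(|y| * c) / σ ^ 2 = -(|y| * c / σ ^ 2) := by ring
      linarith [h3, h4, h5 ▸ h3]
    have := integral_mono_ae (integrable_const _) hint hlb
    calc (0:ℝ) < Real.exp (-(|y| * c / σ ^ 2 + c ^ 2 / (2 * σ ^ 2))) := Real.exp_pos _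
      _ = ∫ _, Real.exp (-(|y| * c / σ ^ 2 + c ^ 2 / (2 * σ ^ 2))) ∂G := by
          rw [integral_const]; simp
      _ ≤ M y := this
  -- smoothness of log ∘ M
  set L : ℝ → ℝ := fun y => Real.log (M y) with hL
  have hLsmooth : ContDiff ℝ (k : ℕ) L := by
    have := aux_contDiff hσ hG k 0
    rw [← hM0] at this
    exact this.log fun y => (hMpos y).ne'
  -- Step 1: mixDens factorization
  have hmix : ∀ y, mixDens σ G y =
      (σ * Real.sqrt (2 * Real.pi))⁻¹ * Real.exp (-(y ^ 2) / (2 * σ ^ 2)) * M y := by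
    intro y
    have hpt : ∀ θ : ℝ, stdNormalPDF ((y - θ) / σ) =
        (Real.sqrt (2 * Real.pi))⁻¹ * (Real.exp (-(y ^ 2) / (2 * σ ^ 2)) *
          Real.exp (y * θ / σ ^ 2 - θ ^ 2 / (2 * σ ^ 2))) := by
      intro θ
      rw [stdNormalPDF, ← Real.exp_add]
      congr 2
      field_simp
      ring
    rw [mixDens]
    simp_rw [hpt]
    rw [integral_const_mul, integral_const_mul]
    rw [mul_inv]
    ring
  -- Step 2: the LHS function equals a constant plus L
  have hLHS : (fun y => Real.log (mixDens σ G y) + y ^ 2 / (2 * σ ^ 2)) =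
      fun y => -Real.log (σ * Real.sqrt (2 * Real.pi)) + L y := by
    funext y
    rw [hmix y]
    have hs : (0:ℝ) < σ * Real.sqrt (2 * Real.pi) :=
      mul_pos hσ (Real.sqrt_pos.mpr (by positivity))
    rw [Real.log_mul (by positivity) (hMpos y).ne',
        Real.log_mul (by positivity) (Real.exp_ne_zero _), Real.log_inv, Real.log_exp]
    rw [hL]
    ring
  -- Step 3: K in terms of L
  have hApos : 0 < A := by
    rw [hA]
    exact inv_pos.mpr (by simpa [hM] using hMpos y₀)
  have hKform : K = fun t => Real.log A + L (y₀ + σ ^ 2 * t) := by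
    funext t
    have hwmeas : Measurable fun θ : ℝ =>
        (A * Real.exp (y₀ * θ / σ ^ 2 - θ ^ 2 / (2 * σ ^ 2))).toNNReal := by
      apply Measurable.real_toNNReal; fun_prop
    have hint : (∫ θ, Real.exp (t * θ) ∂Gtilt) = A * M (y₀ + σ ^ 2 * t) := by
      rw [hGtilt]
      have : (fun θ : ℝ => ENNReal.ofReal (A * Real.exp (y₀ * θ / σ ^ 2 - θ ^ 2 / (2 * σ ^ 2))))
          = fun θ : ℝ =>
            ((A * Real.exp (y₀ * θ / σ ^ 2 - θ ^ 2 / (2 * σ ^ 2))).toNNReal : ℝ≥0∞) := by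
        funext θ; rfl
      rw [this, integral_withDensity_eq_integral_smul hwmeas]
      have hpt : ∀ θ : ℝ,
          (A * Real.exp (y₀ * θ / σ ^ 2 - θ ^ 2 / (2 * σ ^ 2))).toNNReal • Real.exp (t * θ)
          = A * Real.exp ((y₀ + σ ^ 2 * t) * θ / σ ^ 2 - θ ^ 2 / (2 * σ ^ 2)) := by
        intro θ
        have hnn : (0:ℝ) ≤ A * Real.exp (y₀ * θ / σ ^ 2 - θ ^ 2 / (2 * σ ^ 2)) := by positivity
        rw [NNReal.smul_def, smul_eq_mul, Real.coe_toNNReal _ hnn]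
        rw [mul_assoc, ← Real.exp_add]
        congr 2
        field_simp
        ring
      simp_rw [hpt]
      rw [integral_const_mul]
    rw [hK]
    beta_reduce
    rw [hint, Real.log_mul hApos.ne' (hMpos _).ne']
  -- Step 4: compute iteratedDeriv of K at 0
  have hk0 : 0 < k := hk
  have hconst_add : ∀ (C : ℝ) (f : ℝ → ℝ) (x : ℝ),
      iteratedDeriv k (fun z => C + f z) x = iteratedDeriv k f x := by
    intro C f x
    rw [← iteratedDerivWithin_univ, ← iteratedDerivWithin_univ]
    exact iteratedDerivWithin_const_add hk0 C
  have hKderiv : iteratedDeriv k K 0 = (σ ^ 2) ^ k * iteratedDeriv k L y₀ := by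
    rw [hKform, hconst_add]
    have hcomp : (fun t : ℝ => L (y₀ + σ ^ 2 * t)) =
        fun t : ℝ => (fun z => L (y₀ + z)) (σ ^ 2 * t) := rfl
    rw [hcomp]
    have hLshift : ContDiff ℝ (k : ℕ) fun z : ℝ => L (y₀ + z) :=
      hLsmooth.comp (contDiff_const.add contDiff_id)
    rw [iteratedDeriv_comp_const_mul hLshift (σ ^ 2)]
    rw [iteratedDeriv_comp_const_add]
    norm_num
  -- Conclusion
  rw [hLHS, hconst_add, hKderiv]
  rw [pow_mul]
  field_simp
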